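/- Horizontal composition of 2-tracks is well defined: if g is rank-2 homotopic to g', h is rank-2 homotopic to h', and the single point g(ℝ×{1}) equals the single point h(ℝ×{0}) (rank-2 homotopies, being 3-paths, preserve these single points), then the horizontal composition g∘h is rank-2 homotopic to g'∘h'. -/

import Mathlib

open scoped Manifold

variable (E : Type*) [NormedAddCommGroup E] [NormedSpace ℝ E] [FiniteDimensional ℝ E]
variable {M : Type*} [TopologicalSpace M] [ChartedSpace E M]
  [IsManifold 𝓘(ℝ, E) ((⊤ : ℕ∞) : WithTop ℕ∞) M]

/-- A 1-path in `M`: a smooth map `ℝ → M` that is constant near `(-∞, 0]` and near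
`[1, ∞)` (in the sense of the `ε`-conditions). -/
def IsOnePath (γ : ℝ → M) : Prop :=
  ContMDiff 𝓘(ℝ, ℝ) 𝓘(ℝ, E) (⊤ : ℕ∞) γ ∧
    ∃ ε > (0 : ℝ), (∀ t ≤ ε, γ t = γ 0) ∧ (∀ t, 1 - ε ≤ t → γ t = γ 1)

/-- A 2-path in `M`, as a smooth map `ℝ × ℝ → M` with coordinates `(s, t)`,
constant near the boundary in each variable, whose images at `t = 0` and `t = 1`
are single points. -/
def IsTwoPath (g : ℝ × ℝ → M) : Prop :=
  ContMDiff 𝓘(ℝ, ℝ × ℝ) 𝓘(ℝ, E) (⊤ : ℕ∞) g ∧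
    (∃ ε > (0 : ℝ),
      (∀ s t, s ≤ ε → g (s, t) = g (0, t)) ∧
      (∀ s t, 1 - ε ≤ s → g (s, t) = g (1, t)) ∧
      (∀ s t, t ≤ ε → g (s, t) = g (s, 0)) ∧
      (∀ s t, 1 - ε ≤ t → g (s, t) = g (s, 1))) ∧
    (∀ s s', g (s, 0) = g (s', 0)) ∧ (∀ s s', g (s, 1) = g (s', 1))

/-- A rank-1 homotopy: a 2-path whose differential has rank at most 1 at every point. -/
def IsRank1Homotopy (h : ℝ × ℝ → M) : Prop :=
  IsTwoPath E h ∧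
    ∀ p : ℝ × ℝ,
      Module.finrank ℝ
        (LinearMap.range (mfderiv 𝓘(ℝ, ℝ × ℝ) 𝓘(ℝ, E) h p).toLinearMap) ≤ 1

/-- Two 1-paths are rank-1 homotopic if they are joined by a rank-1 homotopy. -/
def Rank1Homotopic (γ γ' : ℝ → M) : Prop :=
  ∃ h : ℝ × ℝ → M, IsRank1Homotopy E h ∧ (∀ t, h (0, t) = γ t) ∧ (∀ t, h (1, t) = γ' t)

/-- A 3-path in `M`, as a smooth map `ℝ × ℝ × ℝ → M` with coordinates `(r, s, t)`. -/
def IsThreePath (α : ℝ × ℝ × ℝ → M) : Prop :=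
  ContMDiff 𝓘(ℝ, ℝ × ℝ × ℝ) 𝓘(ℝ, E) (⊤ : ℕ∞) α ∧
    (∃ ε > (0 : ℝ),
      (∀ r s t, r ≤ ε → α (r, s, t) = α (0, s, t)) ∧
      (∀ r s t, 1 - ε ≤ r → α (r, s, t) = α (1, s, t)) ∧
      (∀ r s t, s ≤ ε → α (r, s, t) = α (r, 0, t)) ∧
      (∀ r s t, 1 - ε ≤ s → α (r, s, t) = α (r, 1, t)) ∧
      (∀ r s t, t ≤ ε → α (r, s, t) = α (r, s, 0)) ∧
      (∀ r s t, 1 - ε ≤ t → α (r, s, t) = α (r, s, 1))) ∧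
    (∀ r s r' s', α (r, s, 0) = α (r', s', 0)) ∧
    (∀ r s r' s', α (r, s, 1) = α (r', s', 1))

/-- A rank-2 homotopy: a 3-path whose differential has rank at most 2 at every point and
whose restrictions to `s = 0` and `s = 1` are rank-1 homotopies. -/
def IsRank2Homotopy (α : ℝ × ℝ × ℝ → M) : Prop :=
  IsThreePath E α ∧
    (∀ p : ℝ × ℝ × ℝ,
      Module.finrank ℝ
        (LinearMap.range (mfderiv 𝓘(ℝ, ℝ × ℝ × ℝ) 𝓘(ℝ, E) α p).toLinearMap) ≤ 2) ∧
    IsRank1Homotopy E (fun p : ℝ × ℝ => α (p.1, 0, p.2)) ∧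
    IsRank1Homotopy E (fun p : ℝ × ℝ => α (p.1, 1, p.2))

/-- `α` is a rank-2 homotopy from the 2-path `g` to the 2-path `g'`. -/
def Rank2HomotopyFrom (α : ℝ × ℝ × ℝ → M) (g g' : ℝ × ℝ → M) : Prop :=
  IsRank2Homotopy E α ∧ (∀ s t, α (0, s, t) = g (s, t)) ∧ (∀ s t, α (1, s, t) = g' (s, t))

/-- Two 2-paths are rank-2 homotopic if they are joined by a rank-2 homotopy. -/
def Rank2Homotopic (g g' : ℝ × ℝ → M) : Prop :=
  ∃ α : ℝ × ℝ × ℝ → M, Rank2HomotopyFrom E α g g'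

/-- Horizontal composition of 2-paths. -/
noncomputable def horizComp (g h : ℝ × ℝ → M) : ℝ × ℝ → M := fun p =>
  if p.2 ≤ 1 / 2 then g (p.1, 2 * p.2) else h (p.1, 2 * p.2 - 1)


section GlueAux

private instance tangentFinDim (x : M) : FiniteDimensional ℝ (TangentSpace 𝓘(ℝ, E) x) :=
  ‹FiniteDimensional ℝ E›

/-- Linear algebra helper: composing with another map cannot increase the rank. -/
private lemma finrank_range_comp_le' {R V W U : Type*} [Field R] [AddCommGroup V] [Module R V]
    [AddCommGroup W] [Module R W] [AddCommGroup U] [Module R U]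
    (T : W →ₗ[R] U) (S : V →ₗ[R] W) {k : ℕ} [FiniteDimensional R U]
    (h : Module.finrank R (LinearMap.range T) ≤ k) :
    Module.finrank R (LinearMap.range (T.comp S)) ≤ k :=
  le_trans (Submodule.finrank_mono (LinearMap.range_comp_le_range S T)) h

/-- Gluing two rank-1 homotopies horizontally yields a rank-1 homotopy. -/
private theorem glue2 (h1 h2 : ℝ × ℝ → M) (H1 : IsRank1Homotopy E h1)
    (H2 : IsRank1Homotopy E h2) (hm : h1 (0, 1) = h2 (0, 0)) :
    IsRank1Homotopy E (horizComp h1 h2) := by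
  obtain ⟨⟨hs1, ⟨ε1, hε1, hA1, hB1, hC1, hD1⟩, hp10, hp11⟩, hr1⟩ := H1
  obtain ⟨⟨hs2, ⟨ε2, hε2, hA2, hB2, hC2, hD2⟩, hp20, hp21⟩, hr2⟩ := H2
  set c : M := h1 (0, 1) with hcdef
  have hc1 : ∀ s, h1 (s, 1) = c := fun s => hp11 s 0
  have hc2 : ∀ s, h2 (s, 0) = c := fun s => (hp20 s 0).trans hm.symm
  set ε : ℝ := min (min ε1 ε2) 1 / 4 with hεdef
  have hm1 : min (min ε1 ε2) 1 ≤ ε1 := le_trans (min_le_left _ _) (min_le_left _ _)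
  have hm2 : min (min ε1 ε2) 1 ≤ ε2 := le_trans (min_le_left _ _) (min_le_right _ _)
  have hm3 : min (min ε1 ε2) 1 ≤ 1 := min_le_right _ _
  have hεpos : 0 < ε := by
    have : 0 < min (min ε1 ε2) 1 := lt_min (lt_min hε1 hε2) one_pos
    linarith
  have hcDef : ∀ (f1 f2 : ℝ × ℝ → M) (s t : ℝ),
      horizComp f1 f2 (s, t) = if t ≤ 1 / 2 then f1 (s, 2 * t) else f2 (s, 2 * t - 1) :=
    fun _ _ _ _ => rfl
  have key : ∀ p : ℝ × ℝ, ∃ F : ℝ × ℝ → M, horizComp h1 h2 =ᶠ[nhds p] F ∧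
      ContMDiffAt 𝓘(ℝ, ℝ × ℝ) 𝓘(ℝ, E) (⊤ : ℕ∞) F p ∧
      Module.finrank ℝ
        (LinearMap.range (mfderiv 𝓘(ℝ, ℝ × ℝ) 𝓘(ℝ, E) F p).toLinearMap) ≤ 1 := by
    intro p
    rcases lt_trichotomy p.2 (1 / 2) with hp | hp | hp
    · have hL : ContMDiff 𝓘(ℝ, ℝ × ℝ) 𝓘(ℝ, ℝ × ℝ) (⊤ : ℕ∞) (fun q : ℝ × ℝ => (q.1, 2 * q.2)) :=
        (contDiff_fst.prodMk (contDiff_const.mul contDiff_snd)).contMDiff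
      refine ⟨h1 ∘ (fun q : ℝ × ℝ => (q.1, 2 * q.2)), ?_, (hs1.comp hL).contMDiffAt, ?_⟩
      · filter_upwards [(isOpen_lt continuous_snd continuous_const).mem_nhds hp] with q hq
        show (if q.2 ≤ 1 / 2 then h1 (q.1, 2 * q.2) else h2 (q.1, 2 * q.2 - 1)) = _
        exact if_pos (le_of_lt hq)
      · rw [mfderiv_comp p (hs1.mdifferentiableAt (by simp)) (hL.mdifferentiableAt (by simp)),
          ContinuousLinearMap.toLinearMap_comp]
        exact finrank_range_comp_le' _ _ (hr1 _)
    · refine ⟨fun _ => c, ?_, contMDiffAt_const, ?_⟩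
      · have hopen : IsOpen {q : ℝ × ℝ | 1 / 2 - ε < q.2 ∧ q.2 < 1 / 2 + ε} :=
          (isOpen_lt continuous_const continuous_snd).inter
            (isOpen_lt continuous_snd continuous_const)
        have hmem : p ∈ {q : ℝ × ℝ | 1 / 2 - ε < q.2 ∧ q.2 < 1 / 2 + ε} :=
          ⟨by rw [hp]; linarith, by rw [hp]; linarith⟩
        filter_upwards [hopen.mem_nhds hmem] with q hq
        show (if q.2 ≤ 1 / 2 then h1 (q.1, 2 * q.2) else h2 (q.1, 2 * q.2 - 1)) = c
        obtain ⟨hq1, hq2⟩ := hq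
        split_ifs with h
        · rw [hD1 q.1 (2 * q.2) (by simp only [hεdef] at hq1 ⊢; linarith)]
          exact hc1 q.1
        · rw [hC2 q.1 (2 * q.2 - 1) (by simp only [hεdef] at hq2 ⊢; linarith)]
          exact hc2 q.1
      · rw [mfderiv_const]
        rw [ContinuousLinearMap.coe_zero, LinearMap.range_zero, finrank_bot]
        norm_num
    · have hL : ContMDiff 𝓘(ℝ, ℝ × ℝ) 𝓘(ℝ, ℝ × ℝ) (⊤ : ℕ∞) (fun q : ℝ × ℝ => (q.1, 2 * q.2 - 1)) :=
        (contDiff_fst.prodMk ((contDiff_const.mul contDiff_snd).sub contDiff_const)).contMDiff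
      refine ⟨h2 ∘ (fun q : ℝ × ℝ => (q.1, 2 * q.2 - 1)), ?_, (hs2.comp hL).contMDiffAt, ?_⟩
      · filter_upwards [(isOpen_lt continuous_const continuous_snd).mem_nhds hp] with q hq
        show (if q.2 ≤ 1 / 2 then h1 (q.1, 2 * q.2) else h2 (q.1, 2 * q.2 - 1)) = _
        exact if_neg (not_le.mpr hq)
      · rw [mfderiv_comp p (hs2.mdifferentiableAt (by simp)) (hL.mdifferentiableAt (by simp)),
          ContinuousLinearMap.toLinearMap_comp]
        exact finrank_range_comp_le' _ _ (hr2 _)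
  have hsm : ContMDiff 𝓘(ℝ, ℝ × ℝ) 𝓘(ℝ, E) (⊤ : ℕ∞) (horizComp h1 h2) := by
    intro p
    obtain ⟨F, hFe, hFs, _⟩ := key p
    exact hFs.congr_of_eventuallyEq hFe
  have hrk : ∀ p : ℝ × ℝ,
      Module.finrank ℝ
        (LinearMap.range (mfderiv 𝓘(ℝ, ℝ × ℝ) 𝓘(ℝ, E) (horizComp h1 h2) p).toLinearMap)
        ≤ 1 := by
    intro p
    obtain ⟨F, hFe, _, hFr⟩ := key p
    rw [hFe.mfderiv_eq]
    exact hFr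
  refine ⟨⟨hsm, ⟨ε, hεpos, ?_, ?_, ?_, ?_⟩, ?_, ?_⟩, hrk⟩
  · intro s t hs
    rw [hcDef, hcDef]
    split_ifs with h
    · exact hA1 s (2 * t) (by linarith)
    · exact hA2 s (2 * t - 1) (by linarith)
  · intro s t hs
    rw [hcDef, hcDef]
    split_ifs with h
    · exact hB1 s (2 * t) (by linarith)
    · exact hB2 s (2 * t - 1) (by linarith)
  · intro s t ht
    rw [hcDef, hcDef, if_pos (by linarith : t ≤ 1 / 2), if_pos (by norm_num : (0:ℝ) ≤ 1 / 2)]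
    rw [show (2:ℝ) * 0 = 0 by norm_num]
    exact hC1 s (2 * t) (by linarith)
  · intro s t ht
    rw [hcDef, hcDef, if_neg (by linarith : ¬ t ≤ 1 / 2), if_neg (by norm_num : ¬ (1:ℝ) ≤ 1 / 2)]
    rw [show (2:ℝ) * 1 - 1 = 1 by norm_num]
    exact hD2 s (2 * t - 1) (by linarith)
  · intro s s'
    rw [hcDef, hcDef, if_pos (by norm_num : (0:ℝ) ≤ 1 / 2), if_pos (by norm_num : (0:ℝ) ≤ 1 / 2)]
    rw [show (2:ℝ) * 0 = 0 by norm_num]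
    exact hp10 s s'
  · intro s s'
    rw [hcDef, hcDef, if_neg (by norm_num : ¬ (1:ℝ) ≤ 1 / 2), if_neg (by norm_num : ¬ (1:ℝ) ≤ 1 / 2)]
    rw [show (2:ℝ) * 1 - 1 = 1 by norm_num]
    exact hp21 s s'

/-- The gluing (in the last coordinate) of two 3-paths. -/
private noncomputable def glue3 (α β : ℝ × ℝ × ℝ → M) : ℝ × ℝ × ℝ → M := fun p =>
  if p.2.2 ≤ 1 / 2 then α (p.1, p.2.1, 2 * p.2.2) else β (p.1, p.2.1, 2 * p.2.2 - 1)

/-- Gluing two rank-2 homotopies in the `t` coordinate yields a rank-2 homotopy. -/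
private theorem glue3_isRank2Homotopy (α β : ℝ × ℝ × ℝ → M) (Hα : IsRank2Homotopy E α)
    (Hβ : IsRank2Homotopy E β) (hm : α (0, 0, 1) = β (0, 0, 0)) :
    IsRank2Homotopy E (glue3 α β) := by
  obtain ⟨⟨hsα, ⟨ε1, hε1, hAr, hBr, hAs, hBs, hAt, hBt⟩, hp0, hp1⟩, hrα, hα0, hα1⟩ := Hα
  obtain ⟨⟨hsβ, ⟨ε2, hε2, hCr, hDr, hCs, hDs, hCt, hDt⟩, hq0, hq1⟩, hrβ, hβ0, hβ1⟩ := Hβ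
  set c : M := α (0, 0, 1) with hcdef
  have hcα : ∀ r s, α (r, s, 1) = c := fun r s => hp1 r s 0 0
  have hcβ : ∀ r s, β (r, s, 0) = c := fun r s => (hq0 r s 0 0).trans hm.symm
  set ε : ℝ := min (min ε1 ε2) 1 / 4 with hεdef
  have hm1 : min (min ε1 ε2) 1 ≤ ε1 := le_trans (min_le_left _ _) (min_le_left _ _)
  have hm2 : min (min ε1 ε2) 1 ≤ ε2 := le_trans (min_le_left _ _) (min_le_right _ _)
  have hm3 : min (min ε1 ε2) 1 ≤ 1 := min_le_right _ _
  have hεpos : 0 < ε := by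
    have : 0 < min (min ε1 ε2) 1 := lt_min (lt_min hε1 hε2) one_pos
    linarith
  have hcDef : ∀ (r s t : ℝ),
      glue3 α β (r, s, t) =
        if t ≤ 1 / 2 then α (r, s, 2 * t) else β (r, s, 2 * t - 1) :=
    fun _ _ _ => rfl
  have key : ∀ p : ℝ × ℝ × ℝ, ∃ F : ℝ × ℝ × ℝ → M, glue3 α β =ᶠ[nhds p] F ∧
      ContMDiffAt 𝓘(ℝ, ℝ × ℝ × ℝ) 𝓘(ℝ, E) (⊤ : ℕ∞) F p ∧
      Module.finrank ℝ
        (LinearMap.range (mfderiv 𝓘(ℝ, ℝ × ℝ × ℝ) 𝓘(ℝ, E) F p).toLinearMap) ≤ 2 := by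
    intro p
    have hcont : Continuous (fun q : ℝ × ℝ × ℝ => q.2.2) := continuous_snd.comp continuous_snd
    rcases lt_trichotomy p.2.2 (1 / 2) with hp | hp | hp
    · have hL : ContMDiff 𝓘(ℝ, ℝ × ℝ × ℝ) 𝓘(ℝ, ℝ × ℝ × ℝ) (⊤ : ℕ∞)
          (fun q : ℝ × ℝ × ℝ => (q.1, q.2.1, 2 * q.2.2)) :=
        (contDiff_fst.prodMk ((contDiff_fst.comp contDiff_snd).prodMk
          (contDiff_const.mul (contDiff_snd.comp contDiff_snd)))).contMDiff
      refine ⟨α ∘ (fun q : ℝ × ℝ × ℝ => (q.1, q.2.1, 2 * q.2.2)), ?_,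
        (hsα.comp hL).contMDiffAt, ?_⟩
      · filter_upwards [(isOpen_lt hcont continuous_const).mem_nhds hp] with q hq
        show (if q.2.2 ≤ 1 / 2 then α (q.1, q.2.1, 2 * q.2.2)
            else β (q.1, q.2.1, 2 * q.2.2 - 1)) = _
        exact if_pos (le_of_lt hq)
      · rw [mfderiv_comp p (hsα.mdifferentiableAt (by simp)) (hL.mdifferentiableAt (by simp)),
          ContinuousLinearMap.toLinearMap_comp]
        exact finrank_range_comp_le' _ _ (hrα _)
    · refine ⟨fun _ => c, ?_, contMDiffAt_const, ?_⟩
      · have hopen : IsOpen {q : ℝ × ℝ × ℝ | 1 / 2 - ε < q.2.2 ∧ q.2.2 < 1 / 2 + ε} :=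
          (isOpen_lt continuous_const hcont).inter (isOpen_lt hcont continuous_const)
        have hmem : p ∈ {q : ℝ × ℝ × ℝ | 1 / 2 - ε < q.2.2 ∧ q.2.2 < 1 / 2 + ε} :=
          ⟨by rw [hp]; linarith, by rw [hp]; linarith⟩
        filter_upwards [hopen.mem_nhds hmem] with q hq
        show (if q.2.2 ≤ 1 / 2 then α (q.1, q.2.1, 2 * q.2.2)
            else β (q.1, q.2.1, 2 * q.2.2 - 1)) = c
        obtain ⟨hq1, hq2⟩ := hq
        split_ifs with h
        · rw [hBt q.1 q.2.1 (2 * q.2.2) (by simp only [hεdef] at hq1 ⊢; linarith)]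
          exact hcα q.1 q.2.1
        · rw [hCt q.1 q.2.1 (2 * q.2.2 - 1) (by simp only [hεdef] at hq2 ⊢; linarith)]
          exact hcβ q.1 q.2.1
      · rw [mfderiv_const]
        rw [ContinuousLinearMap.coe_zero, LinearMap.range_zero, finrank_bot]
        norm_num
    · have hL : ContMDiff 𝓘(ℝ, ℝ × ℝ × ℝ) 𝓘(ℝ, ℝ × ℝ × ℝ) (⊤ : ℕ∞)
          (fun q : ℝ × ℝ × ℝ => (q.1, q.2.1, 2 * q.2.2 - 1)) :=
        (contDiff_fst.prodMk ((contDiff_fst.comp contDiff_snd).prodMk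
          ((contDiff_const.mul (contDiff_snd.comp contDiff_snd)).sub contDiff_const))).contMDiff
      refine ⟨β ∘ (fun q : ℝ × ℝ × ℝ => (q.1, q.2.1, 2 * q.2.2 - 1)), ?_,
        (hsβ.comp hL).contMDiffAt, ?_⟩
      · filter_upwards [(isOpen_lt continuous_const hcont).mem_nhds hp] with q hq
        show (if q.2.2 ≤ 1 / 2 then α (q.1, q.2.1, 2 * q.2.2)
            else β (q.1, q.2.1, 2 * q.2.2 - 1)) = _
        exact if_neg (not_le.mpr hq)
      · rw [mfderiv_comp p (hsβ.mdifferentiableAt (by simp)) (hL.mdifferentiableAt (by simp)),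
          ContinuousLinearMap.toLinearMap_comp]
        exact finrank_range_comp_le' _ _ (hrβ _)
  have hsm : ContMDiff 𝓘(ℝ, ℝ × ℝ × ℝ) 𝓘(ℝ, E) (⊤ : ℕ∞) (glue3 α β) := by
    intro p
    obtain ⟨F, hFe, hFs, _⟩ := key p
    exact hFs.congr_of_eventuallyEq hFe
  have hrk : ∀ p : ℝ × ℝ × ℝ,
      Module.finrank ℝ
        (LinearMap.range (mfderiv 𝓘(ℝ, ℝ × ℝ × ℝ) 𝓘(ℝ, E) (glue3 α β) p).toLinearMap)
        ≤ 2 := by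
    intro p
    obtain ⟨F, hFe, _, hFr⟩ := key p
    rw [hFe.mfderiv_eq]
    exact hFr
  have hside0 : IsRank1Homotopy E (fun p : ℝ × ℝ => glue3 α β (p.1, 0, p.2)) := by
    have heq : (fun p : ℝ × ℝ => glue3 α β (p.1, 0, p.2)) =
        horizComp (fun p : ℝ × ℝ => α (p.1, 0, p.2)) (fun p : ℝ × ℝ => β (p.1, 0, p.2)) := rfl
    rw [heq]
    exact glue2 E _ _ hα0 hβ0 hm
  have hside1 : IsRank1Homotopy E (fun p : ℝ × ℝ => glue3 α β (p.1, 1, p.2)) := by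
    have heq : (fun p : ℝ × ℝ => glue3 α β (p.1, 1, p.2)) =
        horizComp (fun p : ℝ × ℝ => α (p.1, 1, p.2)) (fun p : ℝ × ℝ => β (p.1, 1, p.2)) := rfl
    rw [heq]
    have hm' : α (0, 1, 1) = β (0, 1, 0) := by
      rw [hp1 0 1 0 0, hq0 0 1 0 0]
      exact hm
    exact glue2 E _ _ hα1 hβ1 hm'
  refine ⟨⟨hsm, ⟨ε, hεpos, ?_, ?_, ?_, ?_, ?_, ?_⟩, ?_, ?_⟩, hrk, hside0, hside1⟩
  · intro r s t hr
    rw [hcDef, hcDef]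
    split_ifs with h
    · exact hAr r s (2 * t) (by linarith)
    · exact hCr r s (2 * t - 1) (by linarith)
  · intro r s t hr
    rw [hcDef, hcDef]
    split_ifs with h
    · exact hBr r s (2 * t) (by linarith)
    · exact hDr r s (2 * t - 1) (by linarith)
  · intro r s t hs
    rw [hcDef, hcDef]
    split_ifs with h
    · exact hAs r s (2 * t) (by linarith)
    · exact hCs r s (2 * t - 1) (by linarith)
  · intro r s t hs
    rw [hcDef, hcDef]
    split_ifs with h
    · exact hBs r s (2 * t) (by linarith)
    · exact hDs r s (2 * t - 1) (by linarith)
  · intro r s t ht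
    rw [hcDef, hcDef, if_pos (by linarith : t ≤ 1 / 2), if_pos (by norm_num : (0:ℝ) ≤ 1 / 2)]
    rw [show (2:ℝ) * 0 = 0 by norm_num]
    exact hAt r s (2 * t) (by linarith)
  · intro r s t ht
    rw [hcDef, hcDef, if_neg (by linarith : ¬ t ≤ 1 / 2),
      if_neg (by norm_num : ¬ (1:ℝ) ≤ 1 / 2)]
    rw [show (2:ℝ) * 1 - 1 = 1 by norm_num]
    exact hDt r s (2 * t - 1) (by linarith)
  · intro r s r' s'
    rw [hcDef, hcDef, if_pos (by norm_num : (0:ℝ) ≤ 1 / 2), if_pos (by norm_num : (0:ℝ) ≤ 1 / 2)]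
    rw [show (2:ℝ) * 0 = 0 by norm_num]
    exact hp0 r s r' s'
  · intro r s r' s'
    rw [hcDef, hcDef, if_neg (by norm_num : ¬ (1:ℝ) ≤ 1 / 2),
      if_neg (by norm_num : ¬ (1:ℝ) ≤ 1 / 2)]
    rw [show (2:ℝ) * 1 - 1 = 1 by norm_num]
    exact hq1 r s r' s'

end GlueAux

/-- Horizontal composition of 2-tracks is well defined: horizontal compositions of
rank-2 homotopic 2-paths are rank-2 homotopic. -/
theorem horizComp_rank2Homotopic (g g' h h' : ℝ × ℝ → M)
    (hg : IsTwoPath E g) (hg' : IsTwoPath E g') (hh : IsTwoPath E h) (hh' : IsTwoPath E h')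
    (Hg : Rank2Homotopic E g g') (Hh : Rank2Homotopic E h h')
    (hmatch : g (0, 1) = h (0, 0)) :
    Rank2Homotopic E (horizComp g h) (horizComp g' h') := by
  obtain ⟨α, Hα, hα0, hα1⟩ := Hg
  obtain ⟨β, Hβ, hβ0, hβ1⟩ := Hh
  have hm : α (0, 0, 1) = β (0, 0, 0) := by
    rw [hα0 0 1, hβ0 0 0]
    exact hmatch
  refine ⟨glue3 α β, glue3_isRank2Homotopy E α β Hα Hβ hm, ?_, ?_⟩
  · intro s t
    show (if t ≤ 1 / 2 then α (0, s, 2 * t) else β (0, s, 2 * t - 1)) = _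
    show _ = (if t ≤ 1 / 2 then g (s, 2 * t) else h (s, 2 * t - 1))
    split_ifs with hst
    · exact hα0 s (2 * t)
    · exact hβ0 s (2 * t - 1)
  · intro s t
    show (if t ≤ 1 / 2 then α (1, s, 2 * t) else β (1, s, 2 * t - 1)) = _
    show _ = (if t ≤ 1 / 2 then g' (s, 2 * t) else h' (s, 2 * t - 1))
    split_ifs with hst
    · exact hα1 s (2 * t)
    · exact hβ1 s (2 * t - 1)
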